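/- Let P be a symmetric idempotent real n×n matrix (Pᵀ = P and P² = P), let D⋆ be a diagonal real n×n matrix, and let V be a random vector in ℝ^n whose law is the n-fold product of the standard normal distribution N(0,1). Then the real random variables Vᵀ (P D⋆² P) V and Vᵀ (D⋆ P D⋆) V are identically distributed. -/

import Mathlib

open Matrix MeasureTheory ProbabilityTheory Polynomial

section Aux

lemma my_lintegral_pi_prod : ∀ {n : ℕ} (f : Fin n → ℝ → ENNReal), (∀ i, Measurable (f i)) →
    ∫⁻ x : Fin n → ℝ, ∏ i, f i (x i) ∂(Measure.pi fun _ => (volume : Measure ℝ))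
      = ∏ i, ∫⁻ t, f i t := by
  intro n
  induction n with
  | zero =>
    intro f hf
    simp [Measure.pi_empty_univ]
  | succ n ih =>
    intro f hf
    have hmp := (measurePreserving_piFinSuccAbove (fun _ : Fin (n+1) => (volume : Measure ℝ)) 0).symm
    have hmeas : Measurable fun x : Fin (n+1) → ℝ => ∏ i, f i (x i) :=
      Finset.measurable_prod _ (fun i _ => (hf i).comp (measurable_pi_apply i))
    rw [← hmp.lintegral_comp hmeas]
    have hvec : ∀ z : ℝ × (Fin n → ℝ),
        ((MeasurableEquiv.piFinSuccAbove (fun _ : Fin (n+1) => ℝ) 0).symm z) = Fin.cons z.1 z.2 := by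
      intro z
      funext i
      simp [MeasurableEquiv.piFinSuccAbove_symm_apply, Fin.insertNthEquiv, Fin.insertNth_zero]
    have heq : ∀ z : ℝ × (Fin n → ℝ),
        (∏ i, f i (((MeasurableEquiv.piFinSuccAbove (fun _ : Fin (n+1) => ℝ) 0).symm z) i))
          = f 0 z.1 * ∏ i : Fin n, f (Fin.succ i) (z.2 i) := by
      intro z
      rw [hvec z, Fin.prod_univ_succ]
      simp
    simp_rw [heq]
    rw [lintegral_prod_mul (f := f 0) (g := fun y : Fin n → ℝ => ∏ i : Fin n, f (Fin.succ i) (y i))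
      (hf 0).aemeasurable
      (Finset.measurable_prod _ (fun i _ => (hf (Fin.succ i)).comp (measurable_pi_apply i))).aemeasurable]
    rw [ih (fun i => f (Fin.succ i)) (fun i => hf (Fin.succ i)), Fin.prod_univ_succ]

lemma my_pi_gaussian_eq (n : ℕ) :
    Measure.pi (fun _ : Fin n => gaussianReal 0 1)
      = (volume : Measure (Fin n → ℝ)).withDensity
          (fun x => ∏ i, gaussianPDF 0 1 (x i)) := by
  refine Measure.pi_eq fun s hs => ?_
  rw [withDensity_apply _ (MeasurableSet.univ_pi hs)]
  have hind : ∀ x : Fin n → ℝ, (Set.univ.pi s).indicator (fun x => ∏ i, gaussianPDF 0 1 (x i)) x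
      = ∏ i, (s i).indicator (gaussianPDF 0 1) (x i) := by
    intro x
    by_cases hx : x ∈ Set.univ.pi s
    · rw [Set.indicator_of_mem hx]
      refine Finset.prod_congr rfl fun i _ => ?_
      rw [Set.indicator_of_mem (hx i (Set.mem_univ i))]
    · rw [Set.indicator_of_notMem hx]
      rw [Set.mem_pi] at hx
      push_neg at hx
      obtain ⟨i, _, hi⟩ := hx
      exact (Finset.prod_eq_zero (Finset.mem_univ i)
        (by rw [Set.indicator_of_notMem hi])).symm
  rw [← lintegral_indicator (MeasurableSet.univ_pi hs)]
  simp_rw [hind]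
  rw [volume_pi, my_lintegral_pi_prod _
    (fun i => (measurable_gaussianPDF 0 1).indicator (hs i))]
  refine Finset.prod_congr rfl fun i _ => ?_
  rw [gaussianReal_of_var_ne_zero 0 one_ne_zero, withDensity_apply _ (hs i),
    ← lintegral_indicator (hs i)]

lemma my_mulVec_measurable {n : ℕ} (U : Matrix (Fin n) (Fin n) ℝ) :
    Measurable (U.mulVec) := by
  refine measurable_pi_lambda _ fun i => ?_
  simp only [Matrix.mulVec, dotProduct]
  exact Finset.measurable_sum _ fun j _ => by fun_prop

lemma my_sumsq (n : ℕ) (U : Matrix (Fin n) (Fin n) ℝ) (hU : Uᵀ * U = 1) (x : Fin n → ℝ) :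
    ∑ i, (U *ᵥ x) i ^ 2 = ∑ i, x i ^ 2 := by
  have h1 : ∑ i, (U *ᵥ x) i ^ 2 = (U *ᵥ x) ⬝ᵥ (U *ᵥ x) := by
    simp [dotProduct, sq]
  have h2 : ∑ i, x i ^ 2 = x ⬝ᵥ x := by simp [dotProduct, sq]
  rw [h1, h2, dotProduct_mulVec, ← vecMul_transpose, vecMul_vecMul,
    ← transpose_transpose (Uᵀ * U), transpose_mul, transpose_transpose, vecMul_transpose,
    hU, one_mulVec]

lemma my_prod_pdf (n : ℕ) (y : Fin n → ℝ) :
    ∏ i, gaussianPDF 0 1 (y i)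
      = ENNReal.ofReal ((Real.sqrt (2 * Real.pi))⁻¹ ^ n * Real.exp (-(∑ i, y i ^ 2) / 2)) := by
  simp_rw [gaussianPDF]
  rw [← ENNReal.ofReal_prod_of_nonneg (fun i _ => gaussianPDFReal_nonneg 0 1 (y i))]
  congr 1
  have : ∀ t : ℝ, gaussianPDFReal 0 1 t = (Real.sqrt (2 * Real.pi))⁻¹ * Real.exp (-(t ^ 2) / 2) := by
    intro t
    simp only [gaussianPDFReal, sub_zero, NNReal.coe_one, mul_one, one_mul]
  simp_rw [this]
  rw [Finset.prod_mul_distrib, Finset.prod_const, ← Real.exp_sum]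
  congr 1
  · simp
  · rw [← Finset.sum_div]
    congr 1
    rw [← Finset.sum_neg_distrib]

lemma my_rot_inv (n : ℕ) (U : Matrix (Fin n) (Fin n) ℝ) (hU : U * Uᵀ = 1) :
    Measure.map (U.mulVec) (Measure.pi (fun _ : Fin n => gaussianReal 0 1))
      = Measure.pi (fun _ : Fin n => gaussianReal 0 1) := by
  have hUt : Uᵀ * U = 1 := mul_eq_one_comm.mp hU
  have hdet2 : U.det * U.det = 1 := by
    have := congrArg Matrix.det hU
    rwa [det_mul, det_transpose, det_one] at this
  have hdet : U.det ≠ 0 := by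
    intro h; rw [h, zero_mul] at hdet2; exact zero_ne_one hdet2
  have habs : |U.det| = 1 := by
    have : |U.det| * |U.det| = 1 := by rw [← abs_mul, hdet2, abs_one]
    nlinarith [abs_nonneg U.det]
  have hvol : Measure.map (U.mulVec) (volume : Measure (Fin n → ℝ)) = volume := by
    have h := Real.map_matrix_volume_pi_eq_smul_volume_pi (M := U) hdet
    have hfun : ⇑(Matrix.toLin' U) = U.mulVec := by
      funext v; exact Matrix.toLin'_apply U v
    rw [hfun] at h
    rw [h, abs_inv, habs, inv_one, ENNReal.ofReal_one, one_smul]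
  set F : (Fin n → ℝ) → ENNReal := fun x => ∏ i, gaussianPDF 0 1 (x i) with hF
  have hFmeas : Measurable F :=
    Finset.measurable_prod _ fun i _ => (measurable_gaussianPDF 0 1).comp (measurable_pi_apply i)
  have hFinv : ∀ x, F (U *ᵥ x) = F x := by
    intro x
    rw [hF]
    simp only
    rw [my_prod_pdf, my_prod_pdf, my_sumsq n U hUt]
  rw [my_pi_gaussian_eq]
  ext s hs
  rw [Measure.map_apply (my_mulVec_measurable U) hs,
    withDensity_apply _ ((my_mulVec_measurable U) hs), withDensity_apply _ hs]
  calc ∫⁻ x in U.mulVec ⁻¹' s, F x ∂volume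
      = ∫⁻ x in U.mulVec ⁻¹' s, F (U *ᵥ x) ∂volume := by
        refine setLIntegral_congr_fun ((my_mulVec_measurable U) hs) ?_
        exact fun x _ => (hFinv x).symm
    _ = ∫⁻ y in s, F y ∂(Measure.map (U.mulVec) volume) := by
        rw [setLIntegral_map hs hFmeas (my_mulVec_measurable U)]
    _ = ∫⁻ y in s, F y ∂volume := by rw [hvol]

noncomputable def myQF {n : ℕ} (A : Matrix (Fin n) (Fin n) ℝ) (x : Fin n → ℝ) : ℝ :=
  ∑ i, ∑ j, x i * A i j * x j

lemma myQF_eq_dot {n : ℕ} (A : Matrix (Fin n) (Fin n) ℝ) (x : Fin n → ℝ) :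
    myQF A x = x ⬝ᵥ (A *ᵥ x) := by
  unfold myQF
  rw [dotProduct]
  refine Finset.sum_congr rfl fun i _ => ?_
  rw [Matrix.mulVec, dotProduct, Finset.mul_sum]
  exact Finset.sum_congr rfl fun j _ => by ring

lemma myQF_measurable {n : ℕ} (A : Matrix (Fin n) (Fin n) ℝ) : Measurable (myQF A) := by
  unfold myQF
  exact Finset.measurable_sum _ fun i _ => Finset.measurable_sum _ fun j _ =>
    by fun_prop

lemma myQF_conj {n : ℕ} (C U : Matrix (Fin n) (Fin n) ℝ) (x : Fin n → ℝ) :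
    myQF (U * C * Uᵀ) x = myQF C (Uᵀ *ᵥ x) := by
  rw [myQF_eq_dot, myQF_eq_dot]
  rw [mulVec_mulVec, dotProduct_mulVec, dotProduct_mulVec]
  have h : Uᵀ *ᵥ x = x ᵥ* U := by rw [← vecMul_transpose, transpose_transpose]
  rw [h, vecMul_vecMul, Matrix.mul_assoc]

lemma my_map_qf_conj {n : ℕ} (A C U : Matrix (Fin n) (Fin n) ℝ) (hU : U * Uᵀ = 1)
    (hA : A = U * C * Uᵀ) :
    Measure.map (myQF A) (Measure.pi (fun _ : Fin n => gaussianReal 0 1))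
      = Measure.map (myQF C) (Measure.pi (fun _ : Fin n => gaussianReal 0 1)) := by
  have h1 : myQF A = (myQF C) ∘ (Uᵀ.mulVec) := by
    funext x; rw [hA]; exact myQF_conj C U x
  rw [h1, ← Measure.map_map (myQF_measurable C) (my_mulVec_measurable Uᵀ),
    my_rot_inv n Uᵀ (by rw [transpose_transpose]; exact mul_eq_one_comm.mp hU)]

lemma my_eigen_decomp {n : ℕ} (A : Matrix (Fin n) (Fin n) ℝ) (hA : A.IsHermitian) :
    A = (hA.eigenvectorUnitary : Matrix (Fin n) (Fin n) ℝ) * diagonal hA.eigenvalues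
        * (hA.eigenvectorUnitary : Matrix (Fin n) (Fin n) ℝ)ᵀ
      ∧ (hA.eigenvectorUnitary : Matrix (Fin n) (Fin n) ℝ)
        * (hA.eigenvectorUnitary : Matrix (Fin n) (Fin n) ℝ)ᵀ = 1 := by
  constructor
  · have h := hA.spectral_theorem
    rw [Unitary.conjStarAlgAut_apply, Matrix.star_eq_conjTranspose, conjTranspose_eq_transpose_of_trivial] at h
    exact h
  · have h := (Matrix.mem_unitaryGroup_iff).mp hA.eigenvectorUnitary.2
    rwa [Matrix.star_eq_conjTranspose, conjTranspose_eq_transpose_of_trivial] at h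

lemma my_map_qf_hermitian {n : ℕ} (A : Matrix (Fin n) (Fin n) ℝ) (hA : A.IsHermitian) :
    Measure.map (myQF A) (Measure.pi (fun _ : Fin n => gaussianReal 0 1))
      = Measure.map (myQF (diagonal hA.eigenvalues))
          (Measure.pi (fun _ : Fin n => gaussianReal 0 1)) := by
  obtain ⟨h1, h2⟩ := my_eigen_decomp A hA
  exact my_map_qf_conj A (diagonal hA.eigenvalues) _ h2 h1

lemma my_det_eig {n : ℕ} (A : Matrix (Fin n) (Fin n) ℝ) (hA : A.IsHermitian) (t : ℝ) :
    (t • (1 : Matrix (Fin n) (Fin n) ℝ) - A).det = ∏ i, (t - hA.eigenvalues i) := by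
  obtain ⟨h', hU⟩ := my_eigen_decomp A hA
  set U : Matrix (Fin n) (Fin n) ℝ := (hA.eigenvectorUnitary : Matrix (Fin n) (Fin n) ℝ)
  have hsub : t • (1 : Matrix (Fin n) (Fin n) ℝ) - A
      = U * (diagonal (fun i => t - hA.eigenvalues i)) * Uᵀ := by
    conv_lhs => rw [h']
    have h1 : t • (1 : Matrix (Fin n) (Fin n) ℝ) = U * (t • (1 : Matrix (Fin n) (Fin n) ℝ)) * Uᵀ := by
      rw [Matrix.mul_smul, Matrix.smul_mul, Matrix.mul_one, hU]
    rw [h1, ← Matrix.sub_mul, ← Matrix.mul_sub, smul_one_eq_diagonal, diagonal_sub]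
  rw [hsub, det_mul, det_mul, det_diagonal]
  have : U.det * Uᵀ.det = 1 := by rw [← det_mul, hU, det_one]
  rw [mul_comm U.det _, mul_assoc]
  rw [this, mul_one]

lemma my_det_smul_one_sub_mul_comm {n : ℕ} (M N : Matrix (Fin n) (Fin n) ℝ) {t : ℝ} (ht : t ≠ 0) :
    (t • (1 : Matrix (Fin n) (Fin n) ℝ) - M * N).det
      = (t • (1 : Matrix (Fin n) (Fin n) ℝ) - N * M).det := by
  have key : ∀ (A B : Matrix (Fin n) (Fin n) ℝ),
      t • (1 : Matrix (Fin n) (Fin n) ℝ) - A * B = t • (1 - (t⁻¹ • A) * B) := by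
    intro A B
    rw [smul_sub, Matrix.smul_mul, smul_smul, mul_inv_cancel₀ ht, one_smul]
  rw [key, key, det_smul, det_smul, Matrix.det_one_sub_mul_comm, Matrix.smul_mul,
    Matrix.mul_smul]

lemma my_eig_multiset_eq {n : ℕ} (M : Matrix (Fin n) (Fin n) ℝ)
    (hA : (M * Mᵀ).IsHermitian) (hB : (Mᵀ * M).IsHermitian) :
    Multiset.map hA.eigenvalues Finset.univ.val
      = Multiset.map hB.eigenvalues Finset.univ.val := by
  set pA : Polynomial ℝ := ∏ i, (X - C (hA.eigenvalues i)) with hpA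
  set pB : Polynomial ℝ := ∏ i, (X - C (hB.eigenvalues i)) with hpB
  have heval : ∀ t : ℝ, t ≠ 0 → pA.eval t = pB.eval t := by
    intro t ht
    rw [hpA, hpB, eval_prod, eval_prod]
    simp only [eval_sub, eval_X, eval_C]
    rw [← my_det_eig _ hA t, ← my_det_eig _ hB t]
    exact my_det_smul_one_sub_mul_comm M Mᵀ ht
  have hpq : pA = pB := by
    apply eq_of_infinite_eval_eq
    apply Set.Infinite.mono (s := {(0:ℝ)}ᶜ)
    · intro t ht
      exact heval t ht
    · exact Set.Finite.infinite_compl (Set.finite_singleton 0)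
  have hrA : pA.roots = Multiset.map hA.eigenvalues Finset.univ.val := by
    rw [hpA, Finset.prod_eq_multiset_prod]
    have : Multiset.map (fun i => X - C (hA.eigenvalues i)) Finset.univ.val
        = Multiset.map (fun a => X - C a) (Multiset.map hA.eigenvalues Finset.univ.val) := by
      rw [Multiset.map_map]; rfl
    rw [this, roots_multiset_prod_X_sub_C]
  have hrB : pB.roots = Multiset.map hB.eigenvalues Finset.univ.val := by
    rw [hpB, Finset.prod_eq_multiset_prod]
    have : Multiset.map (fun i => X - C (hB.eigenvalues i)) Finset.univ.val
        = Multiset.map (fun a => X - C a) (Multiset.map hB.eigenvalues Finset.univ.val) := by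
      rw [Multiset.map_map]; rfl
    rw [this, roots_multiset_prod_X_sub_C]
  rw [← hrA, ← hrB, hpq]

lemma my_exists_perm {n : ℕ} (f g : Fin n → ℝ)
    (h : Multiset.map f Finset.univ.val = Multiset.map g Finset.univ.val) :
    ∃ σ : Equiv.Perm (Fin n), g = f ∘ σ := by
  have hperm : (List.ofFn f).Perm (List.ofFn g) := by
    rw [← Multiset.coe_eq_coe]
    have hf : (List.ofFn f : Multiset ℝ) = Multiset.map f Finset.univ.val := by
      rw [List.ofFn_eq_map]
      simp [Fin.univ_def]
    have hg : (List.ofFn g : Multiset ℝ) = Multiset.map g Finset.univ.val := by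
      rw [List.ofFn_eq_map]
      simp [Fin.univ_def]
    rw [hf, hg, h]
  have hsorted : f ∘ (Tuple.sort f) = g ∘ (Tuple.sort g) := by
    apply List.ofFn_injective
    refine List.Perm.eq_of_sortedLE (Tuple.monotone_sort f).sortedLE_ofFn
      (Tuple.monotone_sort g).sortedLE_ofFn ?_
    exact (((Tuple.sort f).ofFn_comp_perm f).trans hperm).trans
      ((Tuple.sort g).ofFn_comp_perm g).symm
  refine ⟨(Tuple.sort g).symm.trans (Tuple.sort f), ?_⟩
  funext i
  have h2 := congrFun hsorted ((Tuple.sort g).symm i)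
  simp only [Function.comp_apply, Equiv.apply_symm_apply] at h2
  simpa [Function.comp, Equiv.trans_apply] using h2.symm

noncomputable def myW {n : ℕ} (σ : Equiv.Perm (Fin n)) : Matrix (Fin n) (Fin n) ℝ :=
  Matrix.of fun i j => if σ i = j then 1 else 0

lemma myW_orth {n : ℕ} (σ : Equiv.Perm (Fin n)) : myW σ * (myW σ)ᵀ = 1 := by
  ext i j
  simp only [mul_apply, transpose_apply, myW, of_apply, ite_mul, one_mul, zero_mul]
  rw [Finset.sum_ite_eq (Finset.univ) (σ i) (fun k => if σ j = k then (1:ℝ) else 0)]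
  simp only [Finset.mem_univ, if_true]
  by_cases hij : i = j
  · subst hij; simp [one_apply]
  · rw [if_neg (fun hc => hij (σ.injective hc).symm)]
    simp [one_apply, hij]

lemma myW_diag {n : ℕ} (σ : Equiv.Perm (Fin n)) (f : Fin n → ℝ) :
    myW σ * diagonal f * (myW σ)ᵀ = diagonal (f ∘ σ) := by
  ext i j
  rw [Matrix.mul_assoc, mul_apply]
  simp only [diagonal_mul, transpose_apply, myW, of_apply, ite_mul, one_mul, zero_mul]
  rw [Finset.sum_ite_eq (Finset.univ) (σ i) (fun k => f k * (if σ j = k then (1:ℝ) else 0))]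
  simp only [Finset.mem_univ, if_true]
  by_cases hij : i = j
  · subst hij; simp [diagonal_apply_eq, Function.comp]
  · rw [if_neg (fun hc => hij (σ.injective hc).symm), mul_zero,
      diagonal_apply_ne _ (fun hc => hij hc)]

end Aux

/-- if `P₀` is symmetric idempotent, `D⋆` diagonal, and `V` a
standard Gaussian vector in `ℝ^n`, then `Vᵀ (P₀ D⋆² P₀) V` and `Vᵀ (D⋆ P₀ D⋆) V`
are identically distributed. -/
theorem identDistrib_quadForm_proj_diag
    (n : ℕ) (P₀ : Matrix (Fin n) (Fin n) ℝ)
    (hsymm : P₀ᵀ = P₀) (hidem : P₀ * P₀ = P₀)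
    (d : Fin n → ℝ) (Dstar : Matrix (Fin n) (Fin n) ℝ)
    (hD : Dstar = Matrix.diagonal d)
    {Ω : Type*} [MeasurableSpace Ω] (P : Measure Ω) [IsProbabilityMeasure P]
    (V : Ω → (Fin n → ℝ)) (hVmeas : Measurable V)
    (hVlaw : Measure.map V P =
      Measure.pi (fun _ : Fin n => gaussianReal 0 1)) :
    IdentDistrib
      (fun ω => ∑ i, ∑ j, V ω i * (P₀ * Dstar ^ 2 * P₀) i j * V ω j)
      (fun ω => ∑ i, ∑ j, V ω i * (Dstar * P₀ * Dstar) i j * V ω j)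
      P P := by
  set μ0 := Measure.pi (fun _ : Fin n => gaussianReal 0 1) with hμ0
  set A := P₀ * Dstar ^ 2 * P₀ with hA
  set B := Dstar * P₀ * Dstar with hB
  set M := P₀ * Dstar with hM
  have hDsym : Dstarᵀ = Dstar := by rw [hD, diagonal_transpose]
  have hAM : A = M * Mᵀ := by
    rw [hA, hM, transpose_mul, hDsym, hsymm, pow_two]
    simp only [Matrix.mul_assoc]
  have hBM : B = Mᵀ * M := by
    rw [hB, hM, transpose_mul, hDsym, hsymm, Matrix.mul_assoc Dstar P₀ (P₀ * Dstar),
      ← Matrix.mul_assoc P₀ P₀ Dstar, hidem, ← Matrix.mul_assoc]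
  have hAH : (M * Mᵀ).IsHermitian := by
    rw [← conjTranspose_eq_transpose_of_trivial]
    exact isHermitian_mul_conjTranspose_self M
  have hBH : (Mᵀ * M).IsHermitian := by
    rw [← conjTranspose_eq_transpose_of_trivial]
    exact isHermitian_conjTranspose_mul_self M
  -- eigenvalue multisets agree, so there is a permutation
  obtain ⟨σ, hσ⟩ := my_exists_perm hAH.eigenvalues hBH.eigenvalues
    (my_eig_multiset_eq M hAH hBH)
  -- the key chain of equalities of laws
  have hchain : Measure.map (myQF (M * Mᵀ)) μ0 = Measure.map (myQF (Mᵀ * M)) μ0 := by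
    rw [my_map_qf_hermitian _ hAH, my_map_qf_hermitian _ hBH]
    have hdiag : diagonal hBH.eigenvalues
        = myW σ * diagonal hAH.eigenvalues * (myW σ)ᵀ := by
      rw [myW_diag σ hAH.eigenvalues, hσ]
    exact (my_map_qf_conj _ _ (myW σ) (myW_orth σ) hdiag).symm
  -- assemble IdentDistrib
  have hf1 : (fun ω => ∑ i, ∑ j, V ω i * A i j * V ω j) = (myQF A) ∘ V := rfl
  have hf2 : (fun ω => ∑ i, ∑ j, V ω i * B i j * V ω j) = (myQF B) ∘ V := rfl
  refine ⟨((myQF_measurable A).comp hVmeas).aemeasurable,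
    ((myQF_measurable B).comp hVmeas).aemeasurable, ?_⟩
  show Measure.map ((myQF A) ∘ V) P = Measure.map ((myQF B) ∘ V) P
  rw [← Measure.map_map (myQF_measurable A) hVmeas,
    ← Measure.map_map (myQF_measurable B) hVmeas, hVlaw]
  rw [hAM, hBM]
  exact hchain
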